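/- Let g ≥ 2 and let F be a free group of rank 2g (the fundamental group of the compact genus-g surface with one boundary component). Let Γ be a normal subgroup of infinite index in F such that the quotient F/Γ is solvable and not cyclic. The conjugation action of F on Γ induces an action of F on the abelianization H_1(Γ; ℤ). Then for every nonzero v ∈ H_1(Γ; ℤ), the subgroup of H_1(Γ; ℤ) generated by the F-orbit of v is infinitely generated. -/

import Mathlib

section ConjAb

/-- The homomorphism `Aut(H) → Aut(H^{ab})` induced on abelianizations. -/
def mulAutToAbAut (H : Type) [Group H] : MulAut H →* MulAut (Abelianization H) where
  toFun e := e.abelianizationCongr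
  map_one' := by
    ext x
    induction x using QuotientGroup.induction_on with
    | H z => rfl
  map_mul' e₁ e₂ := by
    ext x
    induction x using QuotientGroup.induction_on with
    | H z => rfl

variable {G : Type} [Group G]

/-- The conjugation action of `G` on the abelianization of a normal subgroup `N`. -/
def conjAbAction (N : Subgroup G) [N.Normal] : G →* MulAut (Abelianization ↥N) :=
  (mulAutToAbAut ↥N).comp MulAut.conjNormal

/-- `H₁(N; ℤ)`: the abelianization of `N`, written additively (a `ℤ`-module). -/
abbrev H1ab (N : Subgroup G) : Type := Additive (Abelianization ↥N)

/-- The conjugation action of `x : G` on `H₁(N; ℤ)`. -/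
def conjAbSmul (N : Subgroup G) [N.Normal] (x : G) (v : H1ab N) : H1ab N :=
  Additive.ofMul (conjAbAction N x (Additive.toMul v))

end ConjAb



section Magnus

variable {α : Type} (Γ : Subgroup (FreeGroup α)) [Γ.Normal]

local notation "F" => FreeGroup α
local notation "Q" => FreeGroup α ⧸ Γ

/-- Left translation on the index set `α × Q`. -/
def shiftEquiv (q : Q) : (α × (FreeGroup α ⧸ Γ)) ≃ (α × (FreeGroup α ⧸ Γ)) where
  toFun x := (x.1, q * x.2)
  invFun x := (x.1, q⁻¹ * x.2)
  left_inv x := by simp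
  right_inv x := by simp

noncomputable def magnusShift (q : Q) :
    ((α × (FreeGroup α ⧸ Γ)) →₀ ℤ) ≃+ ((α × (FreeGroup α ⧸ Γ)) →₀ ℤ) :=
  Finsupp.domCongr (shiftEquiv Γ q)

lemma magnusShift_single (q : Q) (i : α) (h : Q) (n : ℤ) :
    magnusShift Γ q (Finsupp.single (i, h) n) = Finsupp.single (i, q * h) n := by
  simp [magnusShift, Finsupp.domCongr_apply, Finsupp.equivMapDomain_single, shiftEquiv]

lemma magnusShift_apply (q : Q) (a : (α × (FreeGroup α ⧸ Γ)) →₀ ℤ) (x : α × (FreeGroup α ⧸ Γ)) :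
    magnusShift Γ q a x = a (x.1, q⁻¹ * x.2) := by
  simp [magnusShift, Finsupp.domCongr_apply, Finsupp.equivMapDomain_apply, shiftEquiv]

lemma magnusShift_shift (q q' : Q) (a : (α × (FreeGroup α ⧸ Γ)) →₀ ℤ) :
    magnusShift Γ q (magnusShift Γ q' a) = magnusShift Γ (q * q') a := by
  ext x
  rw [magnusShift_apply, magnusShift_apply, magnusShift_apply]
  simp [mul_assoc]

lemma magnusShift_one (a : (α × (FreeGroup α ⧸ Γ)) →₀ ℤ) : magnusShift Γ 1 a = a := by
  ext x
  rw [magnusShift_apply]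
  simp

/-- The action of `Q` on `Multiplicative A`. -/
noncomputable def magnusRho : Q →* MulAut (Multiplicative ((α × (FreeGroup α ⧸ Γ)) →₀ ℤ)) where
  toFun q := AddEquiv.toMultiplicative (magnusShift Γ q)
  map_one' := by
    ext a : 1
    exact congrArg Multiplicative.ofAdd (magnusShift_one Γ _)
  map_mul' q q' := by
    ext a : 1
    exact congrArg Multiplicative.ofAdd (magnusShift_shift Γ q q' a.toAdd).symm

lemma magnusRho_apply (q : Q) (a : Multiplicative ((α × (FreeGroup α ⧸ Γ)) →₀ ℤ)) :
    magnusRho Γ q a = Multiplicative.ofAdd (magnusShift Γ q a.toAdd) := rfl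

/-- The quotient map. -/
noncomputable abbrev magnusPi : FreeGroup α →* FreeGroup α ⧸ Γ := QuotientGroup.mk' Γ

lemma magnus_mem_of_pi_eq_one {x : FreeGroup α} (h : magnusPi Γ x = 1) : x ∈ Γ := by
  rw [← QuotientGroup.ker_mk' Γ]
  exact h

lemma magnusC_mem (x : FreeGroup α) (hx : x ∈ Γ) : magnusPi Γ x = 1 := by
  rw [← QuotientGroup.ker_mk' Γ] at hx
  exact hx

/-- The Magnus homomorphism `F → A ⋊ Q`. -/
noncomputable def magnusPhi :
    FreeGroup α →* Multiplicative ((α × (FreeGroup α ⧸ Γ)) →₀ ℤ) ⋊[magnusRho Γ] (FreeGroup α ⧸ Γ) :=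
  FreeGroup.lift fun i =>
    ⟨Multiplicative.ofAdd (Finsupp.single (i, (1 : Q)) 1), magnusPi Γ (FreeGroup.of i)⟩

lemma magnusPhi_right (u : FreeGroup α) : (magnusPhi Γ u).right = magnusPi Γ u := by
  have : (SemidirectProduct.rightHom).comp (magnusPhi Γ) = magnusPi Γ := by
    apply FreeGroup.ext_hom
    intro a
    simp [magnusPhi]
  exact DFunLike.congr_fun this u

/-- The Fox-derivative cocycle. -/
noncomputable def magnusC (u : FreeGroup α) : (α × (FreeGroup α ⧸ Γ)) →₀ ℤ :=
  Multiplicative.toAdd (magnusPhi Γ u).left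

lemma magnusC_one : magnusC Γ 1 = 0 := by simp [magnusC]

lemma magnusC_of (i : α) :
    magnusC Γ (FreeGroup.of i) = Finsupp.single (i, (1 : Q)) 1 := by
  simp [magnusC, magnusPhi]

lemma magnusC_mul (u v : FreeGroup α) :
    magnusC Γ (u * v) = magnusC Γ u + magnusShift Γ (magnusPi Γ u) (magnusC Γ v) := by
  simp only [magnusC, map_mul, SemidirectProduct.mul_left, magnusPhi_right]
  rfl

lemma magnusC_inv (u : FreeGroup α) :
    magnusC Γ u⁻¹ = - magnusShift Γ (magnusPi Γ u)⁻¹ (magnusC Γ u) := by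
  have h : (magnusPhi Γ u⁻¹).left
      = (magnusRho Γ ((magnusPi Γ u)⁻¹)) ((magnusPhi Γ u).left)⁻¹ := by
    rw [map_inv, SemidirectProduct.inv_left, magnusPhi_right, map_inv]
  rw [magnusC, h, magnusRho_apply]
  show magnusShift Γ _ (-(Multiplicative.toAdd ((magnusPhi Γ u).left))) = _
  rw [map_neg]
  rfl

/-- The conjugation-equivariance of the Fox cocycle on `Γ`. -/
lemma magnusC_conj (x : FreeGroup α) (γ : FreeGroup α) (hγ : γ ∈ Γ) :
    magnusC Γ (x * γ * x⁻¹) = magnusShift Γ (magnusPi Γ x) (magnusC Γ γ) := by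
  rw [magnusC_mul, magnusC_mul, magnusC_inv]
  have h1 : magnusPi Γ (x * γ) = magnusPi Γ x := by
    rw [map_mul, magnusC_mem Γ γ hγ, mul_one]
  rw [h1, map_neg, magnusShift_shift, mul_inv_cancel, magnusShift_one]
  abel

/-- A section of the quotient map. -/
noncomputable def magnusS (q : Q) : FreeGroup α := Quotient.out q

lemma magnusPi_magnusS (q : Q) : magnusPi Γ (magnusS Γ q) = q := QuotientGroup.out_eq' q

/-- The Schreier-type element `s q * u * (s (q * π u))⁻¹ ∈ Γ`. -/
noncomputable def magnusT (q : Q) (u : FreeGroup α) : Γ :=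
  ⟨magnusS Γ q * u * (magnusS Γ (q * magnusPi Γ u))⁻¹, by
    apply magnus_mem_of_pi_eq_one
    simp [magnusS, map_mul, map_inv, QuotientGroup.out_eq', mul_assoc]⟩

/-- Its class in the (additivized) abelianization of `Γ`. -/
noncomputable def magnusTab (q : Q) (u : FreeGroup α) : Additive (Abelianization Γ) :=
  Additive.ofMul (Abelianization.of (magnusT Γ q u))

/-- The retraction `β : A → Abelianization Γ` sending the basis element `(i,q)` to the
Schreier generator. -/
noncomputable def magnusBeta : ((α × (FreeGroup α ⧸ Γ)) →₀ ℤ) →+ Additive (Abelianization Γ) :=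
  Finsupp.liftAddHom fun p => zmultiplesHom _ (magnusTab Γ p.2 (FreeGroup.of p.1))

lemma magnusBeta_single (i : α) (q : Q) :
    magnusBeta Γ (Finsupp.single (i, q) 1) = magnusTab Γ q (FreeGroup.of i) := by
  simp [magnusBeta, Finsupp.liftAddHom_apply_single]

lemma magnusTab_one (q : Q) : magnusTab Γ q 1 = 0 := by
  have h : magnusT Γ q 1 = 1 := by
    apply Subtype.ext
    show magnusS Γ q * 1 * (magnusS Γ (q * magnusPi Γ 1))⁻¹ = 1
    rw [map_one, mul_one, mul_one, mul_inv_cancel]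
  rw [magnusTab, h, map_one]
  rfl

lemma magnusTab_mul (q : Q) (u v : FreeGroup α) :
    magnusTab Γ q (u * v) = magnusTab Γ q u + magnusTab Γ (q * magnusPi Γ u) v := by
  have key : magnusT Γ q (u * v) = magnusT Γ q u * magnusT Γ (q * magnusPi Γ u) v := by
    apply Subtype.ext
    show magnusS Γ q * (u * v) * (magnusS Γ (q * magnusPi Γ (u * v)))⁻¹
        = (magnusS Γ q * u * (magnusS Γ (q * magnusPi Γ u))⁻¹) *
          (magnusS Γ (q * magnusPi Γ u) * v *
            (magnusS Γ ((q * magnusPi Γ u) * magnusPi Γ v))⁻¹)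
    rw [map_mul, ← mul_assoc q]
    group
  rw [magnusTab, key, map_mul]
  rfl

lemma magnusTab_inv_of (q : Q) (i : α) :
    magnusTab Γ q (FreeGroup.of i)⁻¹
      = - magnusTab Γ (q * (magnusPi Γ (FreeGroup.of i))⁻¹) (FreeGroup.of i) := by
  set q' : Q := q * (magnusPi Γ (FreeGroup.of i))⁻¹ with hq'
  have key : magnusT Γ q (FreeGroup.of i)⁻¹ = (magnusT Γ q' (FreeGroup.of i))⁻¹ := by
    apply Subtype.ext
    show magnusS Γ q * (FreeGroup.of i)⁻¹ * (magnusS Γ (q * magnusPi Γ (FreeGroup.of i)⁻¹))⁻¹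
        = (magnusS Γ q' * FreeGroup.of i * (magnusS Γ (q' * magnusPi Γ (FreeGroup.of i)))⁻¹)⁻¹
    have h1 : q * magnusPi Γ (FreeGroup.of i)⁻¹ = q' := by rw [hq', map_inv]
    have h2 : q' * magnusPi Γ (FreeGroup.of i) = q := by
      rw [hq', inv_mul_cancel_right]
    rw [h1, h2]
    group
  rw [magnusTab, key, map_inv]
  rfl

/-- The key identity: `β (q • c u) = T q u`. -/
lemma magnusBeta_shift_c (u : FreeGroup α) :
    ∀ q : Q, magnusBeta Γ (magnusShift Γ q (magnusC Γ u)) = magnusTab Γ q u := by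
  induction u using FreeGroup.induction_on with
  | C1 =>
    intro q
    rw [magnusC_one, map_zero, map_zero, magnusTab_one]
  | of i =>
    intro q
    show magnusBeta Γ (magnusShift Γ q (magnusC Γ (FreeGroup.of i)))
        = magnusTab Γ q (FreeGroup.of i)
    rw [magnusC_of, magnusShift_single, mul_one, magnusBeta_single]
  | inv_of i _ =>
    intro q
    show magnusBeta Γ (magnusShift Γ q (magnusC Γ (FreeGroup.of i)⁻¹))
        = magnusTab Γ q (FreeGroup.of i)⁻¹
    rw [magnusC_inv, magnusC_of, map_neg, map_neg, magnusShift_shift,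
      magnusShift_single, mul_one, magnusBeta_single, magnusTab_inv_of]
  | mul u v hu hv =>
    intro q
    rw [magnusC_mul, map_add, map_add, magnusShift_shift, hu, hv, magnusTab_mul]

/-- `β ∘ D = id` on the abelianization of `Γ`: `β (c γ) = [γ]`. -/
lemma magnusBeta_c (γ : Γ) :
    magnusBeta Γ (magnusC Γ (γ : FreeGroup α)) = Additive.ofMul (Abelianization.of γ) := by
  have h1 : magnusShift Γ (1 : Q) (magnusC Γ (γ : FreeGroup α))
      = magnusC Γ (γ : FreeGroup α) := magnusShift_one Γ _
  rw [← h1, magnusBeta_shift_c]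
  have hs1 : magnusS Γ (1 : Q) ∈ Γ :=
    magnus_mem_of_pi_eq_one Γ (magnusPi_magnusS Γ 1)
  have hT : magnusT Γ 1 (γ : FreeGroup α)
      = ⟨magnusS Γ 1, hs1⟩ * γ * (⟨magnusS Γ 1, hs1⟩ : Γ)⁻¹ := by
    apply Subtype.ext
    show magnusS Γ 1 * (γ : FreeGroup α) * (magnusS Γ (1 * magnusPi Γ (γ : FreeGroup α)))⁻¹
        = magnusS Γ 1 * (γ : FreeGroup α) * (magnusS Γ 1)⁻¹
    rw [magnusC_mem Γ _ γ.2, mul_one]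
  rw [magnusTab, hT]
  have h2 : Abelianization.of (⟨magnusS Γ 1, hs1⟩ * γ * (⟨magnusS Γ 1, hs1⟩ : Γ)⁻¹)
      = Abelianization.of γ := by
    rw [map_mul, map_mul, map_inv, mul_right_comm, mul_inv_cancel, one_mul]
  rw [h2]

/-- The induced homomorphism on the abelianization of `Γ` (multiplicative form). -/
noncomputable def magnusDmul :
    Abelianization Γ →* Multiplicative ((α × (FreeGroup α ⧸ Γ)) →₀ ℤ) :=
  Abelianization.lift
    { toFun := fun γ : Γ => (magnusPhi Γ (γ : FreeGroup α)).left
      map_one' := by simp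
      map_mul' := by
        intro a b
        show (magnusPhi Γ ((a : FreeGroup α) * (b : FreeGroup α))).left = _
        rw [map_mul, SemidirectProduct.mul_left, magnusPhi_right, magnusC_mem Γ _ a.2, map_one]
        rfl }

lemma magnusDmul_of (γ : Γ) :
    magnusDmul Γ (Abelianization.of γ) = (magnusPhi Γ (γ : FreeGroup α)).left :=
  Abelianization.lift_apply_of _ _

/-- `β` is a retraction of `D`. -/
lemma magnusBeta_Dmul (y : Abelianization Γ) :
    magnusBeta Γ (Multiplicative.toAdd (magnusDmul Γ y)) = Additive.ofMul y := by
  induction y using QuotientGroup.induction_on with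
  | H γ =>
    show magnusBeta Γ (Multiplicative.toAdd (magnusDmul Γ (Abelianization.of γ)))
        = Additive.ofMul (Abelianization.of γ)
    rw [magnusDmul_of]
    exact magnusBeta_c Γ γ

/-- `D` intertwines the conjugation action with the shift action. -/
lemma magnusDmul_conj (x : FreeGroup α) (y : Abelianization Γ) :
    Multiplicative.toAdd (magnusDmul Γ (conjAbAction Γ x y))
      = magnusShift Γ (magnusPi Γ x) (Multiplicative.toAdd (magnusDmul Γ y)) := by
  induction y using QuotientGroup.induction_on with
  | H γ =>
    have h1 : conjAbAction Γ x (Abelianization.of γ)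
        = Abelianization.of (MulAut.conjNormal x γ) := by
      show ((MulAut.conjNormal x : MulAut Γ).abelianizationCongr) (Abelianization.of γ)
          = Abelianization.of (MulAut.conjNormal x γ)
      exact abelianizationCongr_of _ _
    show Multiplicative.toAdd (magnusDmul Γ (conjAbAction Γ x (Abelianization.of γ)))
        = magnusShift Γ (magnusPi Γ x) (Multiplicative.toAdd (magnusDmul Γ (Abelianization.of γ)))
    rw [h1, magnusDmul_of, magnusDmul_of]
    have h2 : ((MulAut.conjNormal x γ : Γ) : FreeGroup α) = x * (γ : FreeGroup α) * x⁻¹ :=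
      MulAut.conjNormal_apply x γ
    rw [h2]
    exact magnusC_conj Γ x (γ : FreeGroup α) γ.2

/-- The induced homomorphism `D : H₁(Γ) →+ A`. -/
noncomputable def magnusDadd : H1ab Γ →+ ((α × (FreeGroup α ⧸ Γ)) →₀ ℤ) :=
  AddMonoidHom.mk' (fun z => Multiplicative.toAdd (magnusDmul Γ (Additive.toMul z)))
    (fun a b => congrArg Multiplicative.toAdd
      (map_mul (magnusDmul Γ) (Additive.toMul a) (Additive.toMul b)))

lemma magnusBeta_Dadd (z : H1ab Γ) : magnusBeta Γ (magnusDadd Γ z) = z :=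
  magnusBeta_Dmul Γ (Additive.toMul z)

lemma magnusDadd_conj (x : FreeGroup α) (z : H1ab Γ) :
    magnusDadd Γ (conjAbSmul Γ x z) = magnusShift Γ (magnusPi Γ x) (magnusDadd Γ z) :=
  magnusDmul_conj Γ x (Additive.toMul z)

/-- The general form of the theorem: only infinite index is needed. -/
theorem magnus_orbit_not_fg (hindex : Γ.index = 0) (v : H1ab Γ) (hv : v ≠ 0) :
    ¬ (AddSubgroup.closure
        (Set.range fun x : FreeGroup α => conjAbSmul Γ x v)).FG := by
  classical
  intro hFG
  -- the quotient is infinite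
  have hQinf : Infinite (FreeGroup α ⧸ Γ) := by
    rcases Nat.card_eq_zero.mp hindex with h | h
    · exact (h.elim (1 : FreeGroup α ⧸ Γ))
    · exact h
  obtain ⟨S, hSfin, hS⟩ :
      ∃ S : Set (H1ab Γ), S.Finite ∧ AddSubgroup.closure S
        = AddSubgroup.closure (Set.range fun x : FreeGroup α => conjAbSmul Γ x v) := by
    rcases (AddSubgroup.fg_iff _).mp hFG with ⟨S, h1, h2⟩
    exact ⟨S, h2, h1⟩
  set D := magnusDadd Γ with hD
  set w := D v with hw
  have hwne : w ≠ 0 := by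
    intro h0
    apply hv
    have := magnusBeta_Dadd Γ v
    rw [← hD] at this
    rw [← this, ← hw, h0, map_zero]
  obtain ⟨p, hp⟩ := Finsupp.support_nonempty_iff.mpr hwne
  -- the finite support bound
  set Sig : Set (α × (FreeGroup α ⧸ Γ)) := ⋃ s ∈ S, ↑((D s).support) with hSig
  have hSigfin : Sig.Finite := hSfin.biUnion fun s _ => (D s).support.finite_toSet
  have hmap : ∀ m ∈ AddSubgroup.closure (Set.range fun x : FreeGroup α => conjAbSmul Γ x v),
      ↑((D m).support) ⊆ Sig := by
    intro m hm
    have hm' : D m ∈ AddSubgroup.map D (AddSubgroup.closure S) := by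
      rw [hS]; exact ⟨m, hm, rfl⟩
    rw [AddMonoidHom.map_closure] at hm'
    have hle : AddSubgroup.closure (⇑D '' S)
        ≤ (Finsupp.supported ℤ ℤ Sig).toAddSubgroup := by
      rw [AddSubgroup.closure_le]
      rintro a ⟨s, hsS, rfl⟩
      show D s ∈ Finsupp.supported ℤ ℤ Sig
      rw [Finsupp.mem_supported]
      rw [hSig]
      exact Set.subset_biUnion_of_mem (u := fun s => ((D s).support : Set (α × (FreeGroup α ⧸ Γ)))) hsS
    have := hle hm'
    rw [Submodule.mem_toAddSubgroup, Finsupp.mem_supported] at this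
    exact this
  -- every shift of w appears
  have hshift : ∀ q : FreeGroup α ⧸ Γ, (p.1, q * p.2) ∈ Sig := by
    intro q
    have hx : magnusPi Γ (magnusS Γ q) = q := magnusPi_magnusS Γ q
    have hmem : conjAbSmul Γ (magnusS Γ q) v ∈
        AddSubgroup.closure (Set.range fun x : FreeGroup α => conjAbSmul Γ x v) :=
      AddSubgroup.subset_closure ⟨magnusS Γ q, rfl⟩
    have hDval : D (conjAbSmul Γ (magnusS Γ q) v) = magnusShift Γ q w := by
      rw [hD, magnusDadd_conj, hx, ← hw]
    have hsupp := hmap _ hmem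
    rw [hDval] at hsupp
    apply hsupp
    rw [Finset.mem_coe, Finsupp.mem_support_iff, magnusShift_apply]
    simpa using Finsupp.mem_support_iff.mp hp
  -- contradiction: Sig would be infinite
  have hinj : Function.Injective (fun q : FreeGroup α ⧸ Γ => (p.1, q * p.2)) := by
    intro a b hab
    have := congrArg Prod.snd hab
    simpa using this
  exact (Set.infinite_of_injective_forall_mem hinj hshift) hSigfin

end Magnus

/-- Let `g ≥ 2` and let `F` be the free group of rank `2g` (the fundamental
group of the compact genus-`g` surface with one boundary component).  Let `Γ` be a normal
subgroup of infinite index in `F` such that `F/Γ` is solvable and not cyclic.  Then for every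
nonzero `v ∈ H₁(Γ; ℤ)`, the subgroup of `H₁(Γ; ℤ)` generated by the `F`-orbit of `v`
(under the conjugation action) is infinitely generated. -/

theorem orbit_span_infinitelyGenerated_freeGroup (g : ℕ) (hg : 2 ≤ g)
    (Γ : Subgroup (FreeGroup (Fin (2 * g)))) [Γ.Normal] (hindex : Γ.index = 0)
    (hsolv : IsSolvable (FreeGroup (Fin (2 * g)) ⧸ Γ))
    (hcyc : ¬ IsCyclic (FreeGroup (Fin (2 * g)) ⧸ Γ))
    (v : H1ab Γ) (hv : v ≠ 0) :
    ¬ (AddSubgroup.closure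
        (Set.range fun x : FreeGroup (Fin (2 * g)) => conjAbSmul Γ x v)).FG :=
  magnus_orbit_not_fg Γ hindex v hv
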